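/- Let C be a cocomplete category and F : ℤ × ℤ → C a functor (where ℤ is the poset of integers). For any integer k, the square formed by the coproduct over i+j=k of the pushouts F(i-1,j) ∪_{F(i-1,j-1)} F(i,j-1), the colimit over {(i,j) : i+j ≤ k-1} of F, the coproduct over i+j=k of F(i,j), and the colimit over {(i,j) : i+j ≤ k} of F, is a pushout square. -/

import Mathlib

open CategoryTheory Limits

universe v u

namespace Stmt2

variable {C : Type u} [Category.{v} C] [HasColimits C]

/-- The full subcategory of `ℤ × ℤ` (the product of the poset `ℤ` with itself) on
the pairs `(i,j)` with `i + j ≤ k`. -/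
abbrev Sub (k : ℤ) := ObjectProperty.FullSubcategory (fun ij : ℤ × ℤ => ij.1 + ij.2 ≤ k)

/-- The restriction of `F : ℤ × ℤ ⥤ C` to the full subcategory `{i + j ≤ k}`. -/
noncomputable abbrev restr (F : ℤ × ℤ ⥤ C) (k : ℤ) : Sub k ⥤ C :=
  ObjectProperty.ι _ ⋙ F

/-- The inclusion `{i + j ≤ k - 1} ⥤ {i + j ≤ k}`. -/
noncomputable abbrev subIncl (k : ℤ) : Sub (k - 1) ⥤ Sub k :=
  ObjectProperty.ιOfLE (fun _ h => le_trans h (by omega))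

/-- `colim_{i+j ≤ k-1} F(i,j)`. -/
noncomputable abbrev colimBelow (F : ℤ × ℤ ⥤ C) (k : ℤ) : C :=
  colimit (subIncl k ⋙ restr F k)

/-- The coproduct `⋁_{i+j=k} F(i-1,j) ∪_{F(i-1,j-1)} F(i,j-1)` of the corner
pushouts. -/
noncomputable abbrev cornerCoprod (F : ℤ × ℤ ⥤ C) (k : ℤ) : C :=
  ∐ fun x : {ij : ℤ × ℤ // ij.1 + ij.2 = k} =>
    pushout
      (F.map (⟨homOfLE (le_refl (x.1.1 - 1)), homOfLE (by omega)⟩ :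
        ((x.1.1 - 1, x.1.2 - 1) : ℤ × ℤ) ⟶ (x.1.1 - 1, x.1.2)))
      (F.map (⟨homOfLE (by omega), homOfLE (le_refl (x.1.2 - 1))⟩ :
        ((x.1.1 - 1, x.1.2 - 1) : ℤ × ℤ) ⟶ (x.1.1, x.1.2 - 1)))

/-- The map from the coproduct of corner pushouts to `colim_{i+j ≤ k-1} F`. -/
noncomputable def topMap (F : ℤ × ℤ ⥤ C) (k : ℤ) :
    cornerCoprod F k ⟶ colimBelow F k :=
  Sigma.desc fun x =>
    pushout.desc
      (colimit.ι (subIncl k ⋙ restr F k)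
        ⟨(x.1.1 - 1, x.1.2), by have := x.2; dsimp; omega⟩)
      (colimit.ι (subIncl k ⋙ restr F k)
        ⟨(x.1.1, x.1.2 - 1), by have := x.2; dsimp; omega⟩)
      (by
        exact (colimit.w (subIncl k ⋙ restr F k)
            (show (⟨(x.1.1 - 1, x.1.2 - 1), by have := x.2; dsimp; omega⟩ : Sub (k - 1)) ⟶
                ⟨(x.1.1 - 1, x.1.2), by have := x.2; dsimp; omega⟩ from
              ObjectProperty.homMk ⟨homOfLE (by dsimp; omega), homOfLE (by dsimp; omega)⟩)).trans
          (colimit.w (subIncl k ⋙ restr F k)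
            (show (⟨(x.1.1 - 1, x.1.2 - 1), by have := x.2; dsimp; omega⟩ : Sub (k - 1)) ⟶
                ⟨(x.1.1, x.1.2 - 1), by have := x.2; dsimp; omega⟩ from
              ObjectProperty.homMk ⟨homOfLE (by dsimp; omega), homOfLE (by dsimp; omega)⟩)).symm)

/-- The componentwise map `F(i-1,j) ∪_{F(i-1,j-1)} F(i,j-1) ⟶ F(i,j)` on the
coproducts over `i + j = k`. -/
noncomputable def leftMap (F : ℤ × ℤ ⥤ C) (k : ℤ) :
    cornerCoprod F k ⟶ ∐ fun x : {ij : ℤ × ℤ // ij.1 + ij.2 = k} => F.obj x.1 :=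
  Limits.Sigma.map fun x =>
    pushout.desc
      (F.map (⟨homOfLE (by omega), homOfLE (le_refl _)⟩ :
        ((x.1.1 - 1, x.1.2) : ℤ × ℤ) ⟶ (x.1.1, x.1.2)))
      (F.map (⟨homOfLE (le_refl _), homOfLE (by omega)⟩ :
        ((x.1.1, x.1.2 - 1) : ℤ × ℤ) ⟶ (x.1.1, x.1.2)))
      (by rw [← F.map_comp, ← F.map_comp]; rfl)

/-- The canonical map `colim_{i+j ≤ k-1} F ⟶ colim_{i+j ≤ k} F`. -/
noncomputable def rightMap (F : ℤ × ℤ ⥤ C) (k : ℤ) :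
    colimBelow F k ⟶ colimit (restr F k) :=
  colimit.pre (restr F k) (subIncl k)

/-- The canonical map `⋁_{i+j=k} F(i,j) ⟶ colim_{i+j ≤ k} F`. -/
noncomputable def bottomMap (F : ℤ × ℤ ⥤ C) (k : ℤ) :
    (∐ fun x : {ij : ℤ × ℤ // ij.1 + ij.2 = k} => F.obj x.1) ⟶ colimit (restr F k) :=
  Sigma.desc fun x => colimit.ι (restr F k) ⟨x.1, le_of_eq x.2⟩

section Aux

variable {C : Type u} [Category.{v} C] [HasColimits C]

lemma homEqZZ {a b : ℤ × ℤ} (f g : a ⟶ b) : f = g := by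
  apply Prod.ext <;> apply Subsingleton.elim

lemma homEqSub {k : ℤ} {a b : Sub k} (f g : a ⟶ b) : f = g := InducedCategory.hom_ext (homEqZZ _ _)

lemma sq_inl (F : ℤ × ℤ ⥤ C) (k : ℤ) {W : C}
    {h : colimBelow F k ⟶ W}
    {v : (∐ fun x : {ij : ℤ × ℤ // ij.1 + ij.2 = k} => F.obj x.1) ⟶ W}
    (hcomm : topMap F k ≫ h = leftMap F k ≫ v)
    (x : {ij : ℤ × ℤ // ij.1 + ij.2 = k}) :
    colimit.ι (subIncl k ⋙ restr F k)
        ⟨(x.1.1 - 1, x.1.2), by have := x.2; dsimp; omega⟩ ≫ h =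
      F.map (⟨homOfLE (by omega), homOfLE (le_refl _)⟩ :
        ((x.1.1 - 1, x.1.2) : ℤ × ℤ) ⟶ (x.1.1, x.1.2)) ≫
        Sigma.ι (fun y : {ij : ℤ × ℤ // ij.1 + ij.2 = k} => F.obj y.1) x ≫ v := by
  have h1 := Sigma.ι _ x ≫= hcomm
  have h2 := pushout.inl _ _ ≫= h1
  simp [topMap, leftMap] at h2
  rw [pushout.inl_desc_assoc, pushout.inl_desc_assoc] at h2
  exact h2

lemma sq_inr (F : ℤ × ℤ ⥤ C) (k : ℤ) {W : C}
    {h : colimBelow F k ⟶ W}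
    {v : (∐ fun x : {ij : ℤ × ℤ // ij.1 + ij.2 = k} => F.obj x.1) ⟶ W}
    (hcomm : topMap F k ≫ h = leftMap F k ≫ v)
    (x : {ij : ℤ × ℤ // ij.1 + ij.2 = k}) :
    colimit.ι (subIncl k ⋙ restr F k)
        ⟨(x.1.1, x.1.2 - 1), by have := x.2; dsimp; omega⟩ ≫ h =
      F.map (⟨homOfLE (le_refl _), homOfLE (by omega)⟩ :
        ((x.1.1, x.1.2 - 1) : ℤ × ℤ) ⟶ (x.1.1, x.1.2)) ≫
        Sigma.ι (fun y : {ij : ℤ × ℤ // ij.1 + ij.2 = k} => F.obj y.1) x ≫ v := by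
  have h1 := Sigma.ι _ x ≫= hcomm
  have h2 := pushout.inr _ _ ≫= h1
  simp [topMap, leftMap] at h2
  rw [pushout.inr_desc_assoc, pushout.inr_desc_assoc] at h2
  exact h2

/-- The cocone on `restr F k` induced by a commuting square on the pushout data. -/
noncomputable def theCocone (F : ℤ × ℤ ⥤ C) (k : ℤ) {W : C}
    (h : colimBelow F k ⟶ W)
    (v : (∐ fun x : {ij : ℤ × ℤ // ij.1 + ij.2 = k} => F.obj x.1) ⟶ W)
    (hcomm : topMap F k ≫ h = leftMap F k ≫ v) : Cocone (restr F k) where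
  pt := W
  ι :=
    { app := fun x =>
        if hx : x.obj.1 + x.obj.2 ≤ k - 1 then
          colimit.ι (subIncl k ⋙ restr F k) ⟨x.obj, hx⟩ ≫ h
        else
          Sigma.ι (fun y : {ij : ℤ × ℤ // ij.1 + ij.2 = k} => F.obj y.1)
            ⟨x.obj, by have := x.property; omega⟩ ≫ v
      naturality := by
        intro x y f
        dsimp only [Functor.const_obj_obj, Functor.const_obj_map]
        rw [Category.comp_id]
        have hfx : x.obj.1 ≤ y.obj.1 := leOfHom f.hom.1
        have hfy : x.obj.2 ≤ y.obj.2 := leOfHom f.hom.2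
        by_cases hy : y.obj.1 + y.obj.2 ≤ k - 1
        · have hx : x.obj.1 + x.obj.2 ≤ k - 1 := by omega
          rw [dif_pos hy, dif_pos hx, ← Category.assoc]
          congr 1
          exact colimit.w (subIncl k ⋙ restr F k)
            (show (⟨x.obj, hx⟩ : Sub (k - 1)) ⟶ ⟨y.obj, hy⟩ from ObjectProperty.homMk f.hom)
        · rw [dif_neg hy]
          have hyk : y.obj.1 + y.obj.2 = k := by have := y.property; omega
          by_cases hx : x.obj.1 + x.obj.2 ≤ k - 1
          · rw [dif_pos hx]
            set Y : {ij : ℤ × ℤ // ij.1 + ij.2 = k} := ⟨y.obj, hyk⟩ with hY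
            rcases lt_or_ge x.obj.1 y.obj.1 with hi | hi
            · have key := sq_inl F k hcomm Y
              have hfac : (restr F k).map f
                  = F.map (show x.obj ⟶ ((y.obj.1 - 1, y.obj.2) : ℤ × ℤ) from
                      ⟨homOfLE (by omega), homOfLE hfy⟩) ≫
                    F.map (⟨homOfLE (by omega), homOfLE (le_refl _)⟩ :
                      ((y.obj.1 - 1, y.obj.2) : ℤ × ℤ) ⟶ (y.obj.1, y.obj.2)) := by
                rw [← F.map_comp]
                exact congrArg F.map (homEqZZ _ _)
              rw [hfac, Category.assoc, ← key, ← Category.assoc]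
              congr 1
              exact colimit.w (subIncl k ⋙ restr F k)
                (show (⟨x.obj, hx⟩ : Sub (k - 1)) ⟶
                    ⟨(y.obj.1 - 1, y.obj.2), by dsimp; omega⟩ from
                  ObjectProperty.homMk ⟨homOfLE (by dsimp; omega), homOfLE hfy⟩)
            · have key := sq_inr F k hcomm Y
              have hfac : (restr F k).map f
                  = F.map (show x.obj ⟶ ((y.obj.1, y.obj.2 - 1) : ℤ × ℤ) from
                      ⟨homOfLE hfx, homOfLE (by omega)⟩) ≫
                    F.map (⟨homOfLE (le_refl _), homOfLE (by omega)⟩ :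
                      ((y.obj.1, y.obj.2 - 1) : ℤ × ℤ) ⟶ (y.obj.1, y.obj.2)) := by
                rw [← F.map_comp]
                exact congrArg F.map (homEqZZ _ _)
              rw [hfac, Category.assoc, ← key, ← Category.assoc]
              congr 1
              exact colimit.w (subIncl k ⋙ restr F k)
                (show (⟨x.obj, hx⟩ : Sub (k - 1)) ⟶
                    ⟨(y.obj.1, y.obj.2 - 1), by dsimp; omega⟩ from
                  ObjectProperty.homMk ⟨homOfLE hfx, homOfLE (by dsimp; omega)⟩)
          · rw [dif_neg hx]
            have hxk : x.obj.1 + x.obj.2 = k := by have := x.property; omega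
            have hobj : x.obj = y.obj := Prod.ext (by omega) (by omega)
            obtain ⟨xo, xp⟩ := x
            obtain ⟨yo, yp⟩ := y
            dsimp at hobj
            subst hobj
            have hf : f = 𝟙 (⟨xo, xp⟩ : Sub k) := homEqSub _ _
            rw [hf]
            show F.map (𝟙 xo) ≫ _ = _
            rw [F.map_id, Category.id_comp] }

end Aux


/-- For a functor `F : ℤ × ℤ ⥤ C` into a cocomplete category and any `k ∈ ℤ`, the
square

  `⋁_{i+j=k} F(i-1,j) ∪_{F(i-1,j-1)} F(i,j-1)`  →  `colim_{i+j ≤ k-1} F(i,j)`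
                     ↓                                        ↓
          `⋁_{i+j=k} F(i,j)`                     →  `colim_{i+j ≤ k} F(i,j)`

is a pushout square. -/



theorem stmt2 (F : ℤ × ℤ ⥤ C) (k : ℤ) :
    IsPushout (topMap F k) (leftMap F k) (rightMap F k) (bottomMap F k) := by
  have w : topMap F k ≫ rightMap F k = leftMap F k ≫ bottomMap F k := by
    apply Sigma.hom_ext
    intro x
    apply pushout.hom_ext
    · have e1 := colimit.w (restr F k)
        (show (⟨(x.1.1 - 1, x.1.2), by have := x.2; dsimp; omega⟩ : Sub k) ⟶
            ⟨x.1, le_of_eq x.2⟩ from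
          ObjectProperty.homMk ⟨homOfLE (by dsimp; omega), homOfLE (by dsimp; omega)⟩)
      simp only [topMap, leftMap, bottomMap, rightMap]
      simp
      rw [pushout.inl_desc_assoc, pushout.inl_desc_assoc, colimit.ι_pre]
      exact e1.symm
    · have e1 := colimit.w (restr F k)
        (show (⟨(x.1.1, x.1.2 - 1), by have := x.2; dsimp; omega⟩ : Sub k) ⟶
            ⟨x.1, le_of_eq x.2⟩ from
          ObjectProperty.homMk ⟨homOfLE (by dsimp; omega), homOfLE (by dsimp; omega)⟩)
      simp only [topMap, leftMap, bottomMap, rightMap]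
      simp
      rw [pushout.inr_desc_assoc, pushout.inr_desc_assoc, colimit.ι_pre]
      exact e1.symm
  refine IsPushout.of_isColimit (PushoutCocone.isColimitAux'
    (PushoutCocone.mk (rightMap F k) (bottomMap F k) w) fun s => ?_)
  refine ⟨colimit.desc (restr F k) (theCocone F k s.inl s.inr s.condition), ?_, ?_, ?_⟩
  · apply colimit.hom_ext
    intro j
    rw [PushoutCocone.mk_inl]
    dsimp [rightMap]
    erw [colimit.ι_pre_assoc, colimit.ι_desc]
    dsimp [theCocone]
    rw [dif_pos j.property]
  · apply colimit.hom_ext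
    intro ⟨x⟩
    rw [PushoutCocone.mk_inr]
    dsimp [bottomMap]
    erw [colimit.ι_desc_assoc]
    dsimp
    erw [colimit.ι_desc]
    dsimp [theCocone]
    rw [dif_neg (show ¬ (x.1.1 + x.1.2 ≤ k - 1) by have := x.2; omega)]
  · intro m hm1 hm2
    rw [PushoutCocone.mk_inl] at hm1
    rw [PushoutCocone.mk_inr] at hm2
    apply colimit.hom_ext (F := restr F k)
    intro j
    erw [colimit.ι_desc]
    dsimp [theCocone]
    by_cases hj : j.obj.1 + j.obj.2 ≤ k - 1
    · rw [dif_pos hj, ← hm1]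
      dsimp [rightMap]
      erw [colimit.ι_pre_assoc]
      rfl
    · rw [dif_neg hj, ← hm2]
      have e : Sigma.ι (fun y : {ij : ℤ × ℤ // ij.1 + ij.2 = k} => F.obj y.1)
            ⟨j.obj, by have := j.property; omega⟩ ≫ bottomMap F k
          = colimit.ι (restr F k) j := by
        simp [bottomMap]
      erw [← Category.assoc, e]
      rfl

end Stmt2
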